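/- The Lobachevsky function satisfies the identity Λ(π/6) = (3/2)·Λ(π/3). -/

import Mathlib

open Real

/-- The Lobachevsky function `Λ(θ) = −∫₀^θ log|2 sin t| dt`. -/
noncomputable def lobachevsky (θ : ℝ) : ℝ :=
  -∫ t in (0 : ℝ)..θ, Real.log |2 * Real.sin t|

open Real MeasureTheory intervalIntegral Set

/-- The integrand of the Lobachevsky function. -/
noncomputable def lsin (t : ℝ) : ℝ := Real.log |2 * Real.sin t|

lemma lsin_meas : Measurable lsin :=
  Real.measurable_log.comp (continuous_abs.comp (continuous_const.mul continuous_sin)).measurable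

lemma lsin_periodic : Function.Periodic lsin π := by
  intro t; simp [lsin, Real.sin_add_pi, mul_neg, abs_neg]

lemma lsin_even (t : ℝ) : lsin (-t) = lsin t := by
  simp [lsin, Real.sin_neg, mul_neg, abs_neg]

lemma lsin_refl (t : ℝ) : lsin (π - t) = lsin t := by
  simp [lsin, Real.sin_pi_sub]

/-- `-log` is interval integrable on `[0,1]`. -/
lemma neg_log_ii : IntervalIntegrable (fun t : ℝ => -Real.log t) volume 0 1 := by
  have hcont : ContinuousOn (fun t : ℝ => t - t * Real.log t) (Set.uIcc 0 1) :=
    (continuous_id.sub Real.continuous_mul_log).continuousOn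
  apply intervalIntegral.intervalIntegrable_deriv_of_nonneg hcont
  · intro x hx
    rw [min_def, max_def] at hx
    norm_num at hx
    have h := Real.hasDerivAt_mul_log (ne_of_gt hx.1)
    have := (hasDerivAt_id x).sub h
    refine this.congr_deriv ?_
    ring
  · intro x hx
    rw [min_def, max_def] at hx
    norm_num at hx
    have : Real.log x ≤ 0 := Real.log_nonpos hx.1.le hx.2.le
    linarith

/-- `lsin` is interval integrable on `[0,1]`. -/
lemma lsin_ii_01 : IntervalIntegrable lsin volume 0 1 := by
  have hg : IntervalIntegrable (fun t : ℝ => Real.log 2 - Real.log t) volume 0 1 := by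
    have h := (_root_.intervalIntegrable_const (c := Real.log 2) (μ := volume)
      (a := (0:ℝ)) (b := 1)).add neg_log_ii
    have he : (fun t : ℝ => Real.log 2 - Real.log t)
        = fun t : ℝ => Real.log 2 + -Real.log t := by funext t; ring
    rw [he]
    exact h
  apply hg.mono_fun' (lsin_meas.aestronglyMeasurable.restrict)
  rw [Set.uIoc_of_le (by norm_num : (0:ℝ) ≤ 1)]
  filter_upwards [ae_restrict_mem measurableSet_Ioc] with x hx
  have hx0 : 0 < x := hx.1
  have hx1 : x ≤ 1 := hx.2
  have hpi2 := Real.two_le_pi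
  have hpi4 := Real.pi_le_four
  have hxpi : x ≤ π / 2 := by linarith
  have hsin : x / 2 ≤ Real.sin x := by
    have h := Real.mul_le_sin hx0.le hxpi
    have h2 : x / 2 ≤ 2 / π * x := by
      rw [div_mul_eq_mul_div, div_le_div_iff₀ two_pos Real.pi_pos]
      nlinarith
    linarith
  have hsinpos : 0 < Real.sin x := lt_of_lt_of_le (by positivity) hsin
  have habs : |2 * Real.sin x| = 2 * Real.sin x := abs_of_pos (by positivity)
  have hsle : Real.sin x ≤ 1 := Real.sin_le_one x
  have hup : Real.log (2 * Real.sin x) ≤ Real.log 2 :=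
    Real.log_le_log (by positivity) (by linarith)
  have hlo : Real.log x ≤ Real.log (2 * Real.sin x) :=
    Real.log_le_log hx0 (by linarith)
  have hlx : Real.log x ≤ 0 := Real.log_nonpos hx0.le hx1
  have hl2 : (0:ℝ) ≤ Real.log 2 := Real.log_nonneg one_le_two
  simp only [lsin, habs, Real.norm_eq_abs]
  rw [abs_le]
  constructor <;> linarith

/-- `lsin` is interval integrable on `[0, π]`. -/
lemma lsin_ii_0pi : IntervalIntegrable lsin volume 0 π := by
  have h1pi2 : IntervalIntegrable lsin volume 1 (π/2) := by
    apply ContinuousOn.intervalIntegrable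
    apply ContinuousOn.log
    · exact (continuous_abs.comp (continuous_const.mul continuous_sin)).continuousOn
    · intro x hx
      have hpi := Real.two_le_pi
      rw [Set.uIcc_of_le (by linarith)] at hx
      have hs : 0 < Real.sin x :=
        Real.sin_pos_of_pos_of_lt_pi (by linarith [hx.1]) (by linarith [hx.2, Real.pi_pos])
      show |2 * Real.sin x| ≠ 0
      positivity
  have h0pi2 : IntervalIntegrable lsin volume 0 (π/2) := lsin_ii_01.trans h1pi2
  have hpi2pi : IntervalIntegrable lsin volume (π/2) π := by
    have heq : (fun x => lsin (π - x)) = lsin := funext lsin_refl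
    have h1 : IntervalIntegrable lsin volume (π - 0) (π - π/2) :=
      heq ▸ (h0pi2.comp_sub_left π)
    have e : π - π/2 = π/2 := by ring
    rw [sub_zero, e] at h1
    exact h1.symm
  exact h0pi2.trans hpi2pi

/-- `lsin` is interval integrable on any interval in `[-π, π]`. -/
lemma lsin_ii {a b : ℝ} (ha : a ∈ Set.Icc (-π) π) (hb : b ∈ Set.Icc (-π) π) :
    IntervalIntegrable lsin volume a b := by
  have hneg : IntervalIntegrable lsin volume (-π) 0 := by
    have heq : (fun x => lsin (-x)) = lsin := funext lsin_even
    have h := (IntervalIntegrable.iff_comp_neg (a := 0) (b := π) (f := lsin) enorm_ne_top).mp lsin_ii_0pi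
    rw [heq] at h
    simpa using h.symm
  have hall : IntervalIntegrable lsin volume (-π) π := hneg.trans lsin_ii_0pi
  apply hall.mono_set
  rw [Set.uIcc_of_le (by linarith [Real.pi_pos] : (-π:ℝ) ≤ π)]
  exact Set.uIcc_subset_Icc ha hb

/-- The set where `sin` or `cos` vanishes is null. -/
lemma bad_set_null :
    volume {t : ℝ | Real.sin t = 0 ∨ Real.cos t = 0} = 0 := by
  apply Set.Countable.measure_zero
  apply Set.Countable.mono (s₂ := (Set.range fun n : ℤ => (n:ℝ) * π) ∪
    (Set.range fun n : ℤ => ((2*n+1:ℤ):ℝ) * π / 2))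
  · rintro t (h | h)
    · obtain ⟨n, hn⟩ := Real.sin_eq_zero_iff.mp h
      exact Or.inl ⟨n, hn⟩
    · obtain ⟨n, hn⟩ := Real.cos_eq_zero_iff.mp h
      refine Or.inr ⟨n, ?_⟩
      push_cast
      linarith
  · exact (Set.countable_range _).union (Set.countable_range _)

lemma lsin_double {t : ℝ} (hs : Real.sin t ≠ 0) (hc : Real.cos t ≠ 0) :
    lsin (2 * t) = lsin t + lsin (t + π/2) := by
  have h1 : (2:ℝ) * Real.sin (2*t) = (2 * Real.sin t) * (2 * Real.cos t) := by
    rw [Real.sin_two_mul]; ring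
  simp only [lsin, h1, abs_mul, Real.sin_add_pi_div_two]
  rw [Real.log_mul (by simpa using hs) (by simpa using hc)]

lemma lobachevsky_eq (θ : ℝ) : lobachevsky θ = -∫ t in (0:ℝ)..θ, lsin t := rfl

open Real in
/-- The duplication formula, for `θ ∈ [0, π/2]`. -/
lemma lob_dup {θ : ℝ} (h0 : 0 ≤ θ) (h2 : θ ≤ π/2) :
    lobachevsky (2*θ) = 2 * lobachevsky θ + 2 * lobachevsky (θ + π/2)
      - 2 * lobachevsky (π/2) := by
  have hpi := Real.pi_pos
  have mem : ∀ x : ℝ, -π ≤ x → x ≤ π → x ∈ Set.Icc (-π) π := fun x h1 h2 => ⟨h1, h2⟩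
  have hscale : ∫ t in (0:ℝ)..(2*θ), lsin t = 2 * ∫ t in (0:ℝ)..θ, lsin (2*t) := by
    rw [intervalIntegral.integral_comp_mul_left lsin two_ne_zero]
    simp only [smul_eq_mul, mul_zero]
    ring
  have hcongr : ∫ t in (0:ℝ)..θ, lsin (2*t)
      = ∫ t in (0:ℝ)..θ, (lsin t + lsin (t + π/2)) := by
    apply intervalIntegral.integral_congr_ae
    have hnull : {t : ℝ | Real.sin t = 0 ∨ Real.cos t = 0}ᶜ ∈ ae volume :=
      MeasureTheory.compl_mem_ae_iff.mpr bad_set_null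
    filter_upwards [hnull] with x hx _
    simp only [Set.mem_compl_iff, Set.mem_setOf_eq, not_or] at hx
    exact lsin_double hx.1 hx.2
  have hadd : ∫ t in (0:ℝ)..θ, (lsin t + lsin (t + π/2))
      = (∫ t in (0:ℝ)..θ, lsin t) + ∫ t in (0:ℝ)..θ, lsin (t + π/2) := by
    apply intervalIntegral.integral_add
    · exact lsin_ii (mem _ (by linarith) (by linarith)) (mem _ (by linarith) (by linarith))
    · have h := (lsin_ii (a := π/2) (b := θ + π/2)
        (mem _ (by linarith) (by linarith)) (mem _ (by linarith) (by linarith))).comp_add_right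
        (π/2)
      simpa using h
  have hshift : ∫ t in (0:ℝ)..θ, lsin (t + π/2)
      = ∫ t in (π/2)..(θ + π/2), lsin t := by
    have := intervalIntegral.integral_comp_add_right (a := (0:ℝ)) (b := θ) (f := lsin) (π/2)
    simpa using this
  have hsplit : (∫ t in (0:ℝ)..(π/2), lsin t) + ∫ t in (π/2)..(θ + π/2), lsin t
      = ∫ t in (0:ℝ)..(θ + π/2), lsin t := by
    apply intervalIntegral.integral_add_adjacent_intervals
    · exact lsin_ii (mem _ (by linarith) (by linarith)) (mem _ (by linarith) (by linarith))
    · exact lsin_ii (mem _ (by linarith) (by linarith)) (mem _ (by linarith) (by linarith))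
  rw [lobachevsky_eq, lobachevsky_eq, lobachevsky_eq, lobachevsky_eq]
  rw [hscale, hcongr, hadd, hshift]
  linarith [hsplit]

lemma lob_neg (θ : ℝ) : lobachevsky (-θ) = -lobachevsky θ := by
  rw [lobachevsky_eq, lobachevsky_eq]
  have h : ∫ t in (0:ℝ)..(-θ), lsin t = ∫ t in (0:ℝ)..(-θ), lsin (-t) := by
    apply intervalIntegral.integral_congr
    intro x _
    exact (lsin_even x).symm
  rw [h, intervalIntegral.integral_comp_neg]
  simp only [neg_neg, neg_zero]
  rw [intervalIntegral.integral_symm 0 θ]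
  ring

open Real in
lemma lob_pi : lobachevsky π = 0 := by
  have hpi := Real.pi_pos
  have h := lob_dup (θ := π/2) (by linarith) le_rfl
  have h1 : 2 * (π/2) = π := by ring
  have h2 : π/2 + π/2 = π := by ring
  rw [h1, h2] at h
  linarith

open Real in
lemma lob_pi_div_two : lobachevsky (π/2) = 0 := by
  have hpi := Real.pi_pos
  have mem : ∀ x : ℝ, -π ≤ x → x ≤ π → x ∈ Set.Icc (-π) π := fun x h1 h2 => ⟨h1, h2⟩
  have h34 : lobachevsky (3*π/4) = -lobachevsky (π/4) := by
    have hsplit : (∫ t in (0:ℝ)..(-π/4), lsin t) + ∫ t in (-π/4)..(3*π/4), lsin t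
        = ∫ t in (0:ℝ)..(3*π/4), lsin t := by
      apply intervalIntegral.integral_add_adjacent_intervals
      · exact lsin_ii (mem _ (by linarith) (by linarith)) (mem _ (by linarith) (by linarith))
      · exact lsin_ii (mem _ (by linarith) (by linarith)) (mem _ (by linarith) (by linarith))
    have hper : ∫ t in (-π/4)..(3*π/4), lsin t = ∫ t in (0:ℝ)..π, lsin t := by
      have h := lsin_periodic.intervalIntegral_add_eq (-π/4) 0
      have e1 : -π/4 + π = 3*π/4 := by ring
      rw [e1, zero_add] at h
      exact h
    have hlpi : ∫ t in (0:ℝ)..π, lsin t = 0 := by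
      have := lob_pi
      rw [lobachevsky_eq] at this
      linarith
    have hn := lob_neg (π/4)
    rw [lobachevsky_eq, lobachevsky_eq] at hn
    rw [lobachevsky_eq, lobachevsky_eq]
    rw [hper, hlpi] at hsplit
    have e2 : -(π/4) = -π/4 := by ring
    rw [e2] at hn
    linarith
  have h := lob_dup (θ := π/4) (by linarith) (by linarith)
  have e1 : 2 * (π/4) = π/2 := by ring
  have e2 : π/4 + π/2 = 3*π/4 := by ring
  rw [e1, e2, h34] at h
  linarith

open Real in
/-- `Λ(π/6) = (3/2)·Λ(π/3)`. -/
theorem lobachevsky_pi_div_six :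
    lobachevsky (π / 6) = (3 / 2) * lobachevsky (π / 3) := by
  have hpi := Real.pi_pos
  have mem : ∀ x : ℝ, -π ≤ x → x ≤ π → x ∈ Set.Icc (-π) π := fun x h1 h2 => ⟨h1, h2⟩
  have h23 : lobachevsky (2*π/3) = -lobachevsky (π/3) := by
    have hsplit : (∫ t in (0:ℝ)..(2*π/3), lsin t) + ∫ t in (2*π/3)..π, lsin t
        = ∫ t in (0:ℝ)..π, lsin t := by
      apply intervalIntegral.integral_add_adjacent_intervals
      · exact lsin_ii (mem _ (by linarith) (by linarith)) (mem _ (by linarith) (by linarith))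
      · exact lsin_ii (mem _ (by linarith) (by linarith)) (mem _ (by linarith) (by linarith))
    have hrefl : ∫ t in (2*π/3)..π, lsin t = ∫ t in (0:ℝ)..(π/3), lsin t := by
      have h := intervalIntegral.integral_comp_sub_left (a := (0:ℝ)) (b := π/3) (f := lsin) π
      have hcongr : ∫ t in (0:ℝ)..(π/3), lsin (π - t) = ∫ t in (0:ℝ)..(π/3), lsin t := by
        apply intervalIntegral.integral_congr
        intro x _
        exact lsin_refl x
      rw [hcongr] at h
      have e1 : π - π/3 = 2*π/3 := by ring
      rw [e1, sub_zero] at h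
      exact h.symm
    have hlpi : ∫ t in (0:ℝ)..π, lsin t = 0 := by
      have := lob_pi
      rw [lobachevsky_eq] at this
      linarith
    rw [lobachevsky_eq, lobachevsky_eq]
    rw [hrefl, hlpi] at hsplit
    linarith
  have h := lob_dup (θ := π/6) (by linarith) (by linarith)
  have e1 : 2 * (π/6) = π/3 := by ring
  have e2 : π/6 + π/2 = 2*π/3 := by ring
  rw [e1, e2, h23, lob_pi_div_two] at h
  linarith
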